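/- For all x ∈ ℝ and q ∈ [0,1), the tangential angle identity ∫₀^x 2q·cn_p(σ,q) dσ = 2 arcsin(q · sn_p(x,q)) holds. -/

import Mathlib

open Real MeasureTheory Set intervalIntegral Filter

noncomputable section

/-- Incomplete p-elliptic integral of the first kind, type 1. -/
def F1 (p q x : ℝ) : ℝ :=
  ∫ θ in (0:ℝ)..x, |Real.cos θ| ^ (1 - 2/p) / Real.sqrt (1 - q^2 * Real.sin θ ^ 2)

/-- Complete p-elliptic integral of the first kind, type 1. -/
def K1 (p q : ℝ) : ℝ := F1 p q (π/2)

/-- Incomplete p-elliptic integral of the second kind, type 1. -/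
def E1 (p q x : ℝ) : ℝ :=
  ∫ θ in (0:ℝ)..x, Real.sqrt (1 - q^2 * Real.sin θ ^ 2) * |Real.cos θ| ^ (1 - 2/p)

/-- Complete p-elliptic integral of the second kind, type 1. -/
def E1c (p q : ℝ) : ℝ := E1 p q (π/2)

/-- Incomplete p-elliptic integral of the first kind, type 2. -/
def F2 (p q x : ℝ) : ℝ :=
  ∫ θ in (0:ℝ)..x, (1 - q^2 * Real.sin θ ^ 2) ^ (-(1/p))

/-- Complete p-elliptic integral of the first kind, type 2. -/
def K2 (p q : ℝ) : ℝ := F2 p q (π/2)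

open Classical in
/-- Domain of the amplitude parametrization: restricted to `(-π/2, π/2)` when `q = 1` and `p ≤ 2`. -/
def amDom (p q : ℝ) : Set ℝ := if q = 1 ∧ p ≤ 2 then Ioo (-(π/2)) (π/2) else univ

/-- `g` is the inverse of `f`, with `f` regarded as a bijection from `S` onto `ℝ`. -/
def IsInverseOn (f g : ℝ → ℝ) (S : Set ℝ) : Prop :=
  (∀ y ∈ S, g (f y) = y) ∧ ∀ x : ℝ, g x ∈ S ∧ f (g x) = x

section WavelikeAux

/-- Continuity of `u ↦ |u|^a * u` for `a > -1`. -/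
lemma wavelike_cont_aux {a : ℝ} (ha : -1 < a) : Continuous fun u : ℝ => |u| ^ a * u := by
  rw [continuous_iff_continuousAt]
  intro x
  rcases eq_or_ne x 0 with rfl | hx
  · have key : ∀ u : ℝ, ‖|u| ^ a * u‖ ≤ |u| ^ (a + 1) := by
      intro u
      rcases eq_or_ne u 0 with rfl | hu
      · simp [Real.zero_rpow (show a + 1 ≠ 0 by linarith)]
      · have h1 : (0:ℝ) < |u| := abs_pos.2 hu
        rw [Real.norm_eq_abs, abs_mul, abs_of_nonneg (Real.rpow_nonneg (abs_nonneg u) a),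
          Real.rpow_add_one h1.ne']
    have lim : Tendsto (fun u : ℝ => |u| ^ (a+1)) (nhds 0) (nhds 0) := by
      have hc : ContinuousAt (fun v : ℝ => v ^ (a+1)) (|(0:ℝ)|) := by
        simpa using Real.continuousAt_rpow_const 0 (a+1) (Or.inr (by linarith))
      have h2 : ContinuousAt (fun u : ℝ => |u| ^ (a+1)) 0 :=
        hc.comp (continuous_abs.continuousAt (x := (0:ℝ)))
      have := h2.tendsto
      simpa [Real.zero_rpow (show a + 1 ≠ 0 by linarith)] using this
    have : Tendsto (fun u : ℝ => |u| ^ a * u) (nhds 0) (nhds 0) := squeeze_zero_norm key lim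
    simpa [ContinuousAt] using this
  · exact (continuous_abs.continuousAt.rpow_const (Or.inl (abs_ne_zero.2 hx))).mul
      continuousAt_id

variable {p q : ℝ} (hp : 1 < p) (hq0 : 0 ≤ q) (hq1 : q < 1)

include hq0 hq1 in
lemma wavelike_Dpos (θ : ℝ) : 0 < 1 - q^2 * Real.sin θ ^ 2 := by
  have h1 : Real.sin θ ^ 2 ≤ 1 := Real.sin_sq_le_one θ
  have h2 : q^2 < 1 := by nlinarith
  nlinarith [sq_nonneg q, sq_nonneg (Real.sin θ)]

lemma wavelike_gmeas :
    Measurable (fun θ : ℝ => |Real.cos θ| ^ (1 - 2/p) / Real.sqrt (1 - q^2 * Real.sin θ ^ 2)) := by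
  have m1 : Measurable fun u : ℝ => u ^ (1 - 2/p) :=
    measurable_of_continuousOn_compl_singleton 0 (fun x hx =>
      (Real.continuousAt_rpow_const x _ (Or.inl hx)).continuousWithinAt)
  have m2 : Measurable fun θ : ℝ => |Real.cos θ| ^ (1 - 2/p) :=
    m1.comp (Real.continuous_cos.abs.measurable)
  have m3 : Continuous fun θ : ℝ => Real.sqrt (1 - q^2 * Real.sin θ ^ 2) :=
    (continuous_const.sub (continuous_const.mul (Real.continuous_sin.pow 2))).sqrt
  exact m2.div m3.measurable

include hp hq0 hq1 in
lemma wavelike_gint_tile (hrneg : 1 - 2/p < 0) :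
    IntervalIntegrable (fun θ : ℝ => |Real.cos θ| ^ (1 - 2/p) / Real.sqrt (1 - q^2 * Real.sin θ ^ 2))
      volume (-(π/2)) (π/2) := by
  set r : ℝ := 1 - 2/p with hrdef
  have hπ : (0:ℝ) < π := Real.pi_pos
  have hq2 : (0:ℝ) < 1 - q^2 := by nlinarith
  set B : ℝ → ℝ := fun t => ((π/2 - t) ^ r + (π/2 + t) ^ r) * ((2/π) ^ r / Real.sqrt (1 - q^2))
    with hBdef
  have hr1 : (-1:ℝ) < r := by
    have hp0 : (0:ℝ) < p := by linarith
    have : 2/p < 2 := by rw [div_lt_iff₀ hp0]; linarith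
    simp only [hrdef]; linarith
  have i1 : IntervalIntegrable (fun t : ℝ => (π/2 - t) ^ r) volume (-(π/2)) (π/2) := by
    have h := (intervalIntegrable_rpow' (a := 0) (b := π) hr1).comp_sub_left (π/2)
    rw [sub_zero] at h
    have e : π/2 - π = -(π/2) := by ring
    rw [e] at h
    exact h.symm
  have i2 : IntervalIntegrable (fun t : ℝ => (π/2 + t) ^ r) volume (-(π/2)) (π/2) := by
    have h := (intervalIntegrable_rpow' (a := 0) (b := π) hr1).comp_add_left (π/2)
    have e1 : (0:ℝ) - π/2 = -(π/2) := by ring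
    have e2 : π - π/2 = π/2 := by ring
    rw [e1, e2] at h
    exact h
  have Bint : IntervalIntegrable B volume (-(π/2)) (π/2) := (i1.add i2).mul_const _
  refine Bint.mono_fun ((wavelike_gmeas (p := p) (q := q)).aestronglyMeasurable.restrict) ?_
  refine MeasureTheory.ae_restrict_of_forall_mem measurableSet_uIoc ?_
  intro t ht
  have ht' : t ∈ Icc (-(π/2)) (π/2) := by
    rw [uIoc_of_le (by linarith : -(π/2) ≤ π/2)] at ht
    exact ⟨ht.1.le, ht.2⟩
  have hcosnn : 0 ≤ Real.cos t := Real.cos_nonneg_of_mem_Icc ht'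
  have habs : |t| ≤ π/2 := abs_le.2 ⟨ht'.1, ht'.2⟩
  have hcos_ge : 2/π * (π/2 - |t|) ≤ Real.cos t := by
    rcases le_total 0 t with h0 | h0
    · rw [abs_of_nonneg h0, ← Real.sin_pi_div_two_sub]
      exact Real.mul_le_sin (by linarith [ht'.2]) (by linarith)
    · rw [abs_of_nonpos h0, ← Real.cos_neg, ← Real.sin_pi_div_two_sub]
      have h2 := Real.mul_le_sin (x := π/2 + t) (by linarith [ht'.1]) (by linarith)
      have e : π/2 - -t = π/2 + t := by ring
      rw [e]
      exact h2
  have hBnn : 0 ≤ B t := by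
    have h1 := Real.rpow_nonneg (by linarith [ht'.2] : (0:ℝ) ≤ π/2 - t) r
    have h2 := Real.rpow_nonneg (by linarith [ht'.1] : (0:ℝ) ≤ π/2 + t) r
    have h3 := Real.rpow_nonneg (by positivity : (0:ℝ) ≤ 2/π) r
    positivity
  have hgnn : 0 ≤ |Real.cos t| ^ r / Real.sqrt (1 - q^2 * Real.sin t ^ 2) := by positivity
  show ‖|Real.cos t| ^ r / Real.sqrt (1 - q^2 * Real.sin t ^ 2)‖ ≤ ‖B t‖
  rw [Real.norm_eq_abs, Real.norm_eq_abs, abs_of_nonneg hgnn, abs_of_nonneg hBnn]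
  have sqrtD_ge : Real.sqrt (1 - q^2) ≤ Real.sqrt (1 - q^2 * Real.sin t ^ 2) := by
    apply Real.sqrt_le_sqrt
    nlinarith [Real.sin_sq_le_one t, sq_nonneg q]
  have sqrt_pos : (0:ℝ) < Real.sqrt (1 - q^2) := Real.sqrt_pos.2 hq2
  have key : |Real.cos t| ^ r ≤ (2/π) ^ r * ((π/2 - t) ^ r + (π/2 + t) ^ r) := by
    have hsum : (π/2 - |t|) ^ r ≤ (π/2 - t) ^ r + (π/2 + t) ^ r := by
      rcases le_total 0 t with h0 | h0
      · rw [abs_of_nonneg h0]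
        have := Real.rpow_nonneg (by linarith [ht'.1] : (0:ℝ) ≤ π/2 + t) r
        linarith
      · rw [abs_of_nonpos h0]
        have := Real.rpow_nonneg (by linarith [ht'.2] : (0:ℝ) ≤ π/2 - t) r
        have he : π/2 - -t = π/2 + t := by ring
        rw [he]; linarith
    by_cases hct : Real.cos t = 0
    · rw [hct]
      simp only [abs_zero, Real.zero_rpow (by linarith : r ≠ 0)]
      have h1 := Real.rpow_nonneg (by positivity : (0:ℝ) ≤ 2/π) r
      have h2 := Real.rpow_nonneg (by linarith [ht'.2] : (0:ℝ) ≤ π/2 - t) r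
      have h3 := Real.rpow_nonneg (by linarith [ht'.1] : (0:ℝ) ≤ π/2 + t) r
      positivity
    · have habslt : |t| < π/2 := by
        rcases lt_or_eq_of_le habs with h | h
        · exact h
        · exfalso
          rcases (abs_eq (by positivity : (0:ℝ) ≤ π/2)).1 h with h' | h'
          · exact hct (by rw [h']; exact Real.cos_pi_div_two)
          · rw [h'] at hct
            exact hct (by rw [Real.cos_neg]; exact Real.cos_pi_div_two)
      have pos : (0:ℝ) < 2/π * (π/2 - |t|) := by
        have : (0:ℝ) < π/2 - |t| := by linarith
        positivity
      calc |Real.cos t| ^ r = Real.cos t ^ r := by rw [abs_of_nonneg hcosnn]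
        _ ≤ (2/π * (π/2 - |t|)) ^ r := Real.rpow_le_rpow_of_nonpos pos hcos_ge hrneg.le
        _ = (2/π) ^ r * (π/2 - |t|) ^ r := Real.mul_rpow (by positivity) (by linarith)
        _ ≤ (2/π) ^ r * ((π/2 - t) ^ r + (π/2 + t) ^ r) := by
            have := Real.rpow_nonneg (by positivity : (0:ℝ) ≤ 2/π) r
            exact mul_le_mul_of_nonneg_left hsum this
  calc |Real.cos t| ^ r / Real.sqrt (1 - q^2 * Real.sin t ^ 2)
      ≤ |Real.cos t| ^ r / Real.sqrt (1 - q^2) := by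
        gcongr
    _ ≤ ((2/π) ^ r * ((π/2 - t) ^ r + (π/2 + t) ^ r)) / Real.sqrt (1 - q^2) := by gcongr
    _ = B t := by rw [hBdef]; ring

include hp hq0 hq1 in
lemma wavelike_gint_all (a b : ℝ) :
    IntervalIntegrable (fun θ : ℝ => |Real.cos θ| ^ (1 - 2/p) / Real.sqrt (1 - q^2 * Real.sin θ ^ 2))
      volume a b := by
  set r : ℝ := 1 - 2/p with hrdef
  set g : ℝ → ℝ := fun θ => |Real.cos θ| ^ r / Real.sqrt (1 - q^2 * Real.sin θ ^ 2) with hgdef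
  have hπ : (0:ℝ) < π := Real.pi_pos
  rcases le_or_gt 0 r with hr0 | hrneg
  · have hc : Continuous g := by
      apply Continuous.div
      · exact (Real.continuous_cos.abs).rpow_const (fun x => Or.inr hr0)
      · exact (continuous_const.sub (continuous_const.mul (Real.continuous_sin.pow 2))).sqrt
      · exact fun x => (Real.sqrt_pos.2 (wavelike_Dpos hq0 hq1 x)).ne'
    exact hc.intervalIntegrable a b
  · have tile : IntervalIntegrable g volume (-(π/2)) (π/2) := wavelike_gint_tile hp hq0 hq1 hrneg
    have gper : Function.Periodic g π := by
      intro x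
      simp only [hgdef, Real.cos_add_pi, Real.sin_add_pi, abs_neg, neg_sq]
    have tileK : ∀ k : ℤ, IntervalIntegrable g volume (-(π/2) + k*π) (-(π/2) + k*π + π) := by
      intro k
      have h := tile.comp_sub_right (k*π)
      have he : (fun x => g (x - k*π)) = g := funext fun x => gper.sub_int_mul_eq k
      rw [he] at h
      have e2 : π/2 + (k:ℝ)*π = -(π/2) + (k:ℝ)*π + π := by ring
      rw [← e2]
      exact h
    have chain : ∀ (k : ℤ) (n : ℕ),
        IntervalIntegrable g volume (-(π/2) + k*π) (-(π/2) + k*π + n*π) := by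
      intro k n
      induction n with
      | zero => simp
      | succ n ih =>
        have h2 := tileK (k + n)
        have e : -(π/2) + ((k + n : ℤ):ℝ)*π = -(π/2) + k*π + n*π := by push_cast; ring
        rw [e] at h2
        have e2 : -(π/2) + (k:ℝ)*π + (n:ℝ)*π + π = -(π/2) + (k:ℝ)*π + ((n+1 : ℕ):ℝ)*π := by
          push_cast; ring
        rw [e2] at h2
        exact ih.trans h2
    obtain ⟨k, hk⟩ := exists_int_lt ((min a b + π/2) / π)
    have hka : -(π/2) + k*π < min a b := by
      rw [lt_div_iff₀ hπ] at hk
      linarith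
    obtain ⟨n, hn⟩ := exists_nat_gt ((max a b + π/2 - k*π) / π)
    have hnb : max a b < -(π/2) + k*π + n*π := by
      rw [div_lt_iff₀ hπ] at hn
      linarith
    refine (chain k n).mono_set ?_
    have hnn : (0:ℝ) ≤ (n:ℝ)*π := by positivity
    have hle : -(π/2) + (k:ℝ)*π ≤ -(π/2) + k*π + n*π := by linarith
    rw [uIcc_of_le hle]
    have hmem : ∀ c : ℝ, min a b ≤ c → c ≤ max a b →
        c ∈ Icc (-(π/2) + (k:ℝ)*π) (-(π/2) + (k:ℝ)*π + (n:ℝ)*π) :=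
      fun c h1 h2 => ⟨by linarith, by linarith⟩
    intro x hx
    rcases mem_uIcc.1 hx with ⟨h1, h2⟩ | ⟨h1, h2⟩
    · exact hmem x (le_trans (min_le_left a b) h1) (le_trans h2 (le_max_right a b))
    · exact hmem x (le_trans (min_le_right a b) h1) (le_trans h2 (le_max_left a b))

end WavelikeAux

/-- Tangential-angle identity: `∫₀^x 2q·cn_p(σ,q) dσ = 2 arcsin(q·sn_p(x,q))`. -/
theorem wavelike_angle (p q : ℝ) (hp : 1 < p) (hq : q ∈ Set.Ico (0:ℝ) 1)
    (am : ℝ → ℝ) (ham : IsInverseOn (F1 p q) am Set.univ) :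
    ∀ x : ℝ,
      (∫ σ in (0:ℝ)..x, 2 * q * (|Real.cos (am σ)| ^ (2/p - 1) * Real.cos (am σ)))
        = 2 * Real.arcsin (q * Real.sin (am x)) := by
  obtain ⟨hq0, hq1⟩ := hq
  have hπ : (0:ℝ) < π := Real.pi_pos
  have hp0 : (0:ℝ) < p := by linarith
  set g : ℝ → ℝ := fun θ => |Real.cos θ| ^ (1 - 2/p) / Real.sqrt (1 - q^2 * Real.sin θ ^ 2)
    with hgdef
  have gint : ∀ a b : ℝ, IntervalIntegrable g volume a b :=
    fun a b => wavelike_gint_all hp hq0 hq1 a b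
  have gnn : ∀ θ, 0 ≤ g θ := fun θ => by
    simp only [hgdef]
    positivity
  have hDpos : ∀ θ : ℝ, 0 < 1 - q^2 * Real.sin θ ^ 2 := wavelike_Dpos hq0 hq1
  have hF1 : ∀ x : ℝ, F1 p q x = ∫ θ in (0:ℝ)..x, g θ := fun x => rfl
  have hF1add : ∀ a b : ℝ, F1 p q b = F1 p q a + ∫ θ in a..b, g θ := by
    intro a b
    rw [hF1 a, hF1 b, intervalIntegral.integral_add_adjacent_intervals (gint 0 a) (gint a b)]
  have hMono : Monotone (F1 p q) := by
    intro a b hab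
    rw [hF1add a b]
    have := intervalIntegral.integral_nonneg (f := g) (μ := volume) hab (fun u _ => gnn u)
    linarith
  have hInj : Function.Injective (F1 p q) := fun a b hab => by
    have h1 := ham.1 a (mem_univ a)
    have h2 := ham.1 b (mem_univ b)
    rw [← h1, ← h2, hab]
  have hSM : StrictMono (F1 p q) := hMono.strictMono_of_injective hInj
  have hSurj : Function.Surjective (F1 p q) := fun x => ⟨am x, (ham.2 x).2⟩
  set e := StrictMono.orderIsoOfSurjective (F1 p q) hSM hSurj with hedef
  have ham_eq : am = ⇑e.symm := by
    funext x
    apply hInj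
    rw [(ham.2 x).2]
    exact (StrictMono.orderIsoOfSurjective_self_symm_apply (F1 p q) hSM hSurj x).symm
  have am_cont : Continuous am := by rw [ham_eq]; exact OrderIso.continuous e.symm
  have F1cont : Continuous (F1 p q) := by
    have hco : ⇑e = F1 p q := StrictMono.coe_orderIsoOfSurjective (F1 p q) hSM hSurj
    rw [← hco]; exact OrderIso.continuous e
  have ha2 : (-1:ℝ) < 2/p - 1 := by
    have : (0:ℝ) < 2/p := by positivity
    linarith
  set h : ℝ → ℝ := fun σ => 2 * q * (|Real.cos (am σ)| ^ (2/p - 1) * Real.cos (am σ)) with hhdef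
  have hcont : Continuous h := by
    have hc := (wavelike_cont_aux ha2).comp (Real.continuous_cos.comp am_cont)
    exact continuous_const.mul hc
  set G : ℝ → ℝ := fun t => ∫ σ in (0:ℝ)..t, h σ with hGdef
  have hG : ∀ t, HasDerivAt G (h t) t := fun t =>
    intervalIntegral.integral_hasDerivAt_right (hcont.intervalIntegrable _ _)
      (hcont.stronglyMeasurableAtFilter _ _) hcont.continuousAt
  have Gcont : Continuous G := continuous_iff_continuousAt.2 fun t => (hG t).continuousAt
  have hF1d : ∀ y : ℝ, Real.cos y ≠ 0 → HasDerivAt (F1 p q) (g y) y := by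
    intro y hy
    have meas : StronglyMeasurableAtFilter g (nhds y) volume :=
      ⟨univ, univ_mem, ((wavelike_gmeas (p := p) (q := q)).aestronglyMeasurable).restrict⟩
    have cont : ContinuousAt g y := by
      apply ContinuousAt.div
      · exact (Real.continuous_cos.continuousAt.abs).rpow_const (Or.inl (abs_ne_zero.2 hy))
      · exact ((continuous_const.sub
          (continuous_const.mul (Real.continuous_sin.pow 2))).sqrt).continuousAt
      · exact (Real.sqrt_pos.2 (hDpos y)).ne'
    exact intervalIntegral.integral_hasDerivAt_right (gint 0 y) meas cont
  set H : ℝ → ℝ := fun y => G (F1 p q y) - 2 * Real.arcsin (q * Real.sin y) with hHdef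
  have Hcont : Continuous H :=
    (Gcont.comp F1cont).sub (continuous_const.mul
      (Real.continuous_arcsin.comp (continuous_const.mul Real.continuous_sin)))
  have Hderiv : ∀ y : ℝ, Real.cos y ≠ 0 → HasDerivAt H 0 y := by
    intro y hy
    have d1 : HasDerivAt (fun u => G (F1 p q u)) (h (F1 p q y) * g y) y :=
      (hG (F1 p q y)).comp y (hF1d y hy)
    have hsin : |q * Real.sin y| < 1 := by
      rw [abs_mul, abs_of_nonneg hq0]
      have h1 : |Real.sin y| ≤ 1 := Real.abs_sin_le_one y
      nlinarith [abs_nonneg (Real.sin y)]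
    have hne1 : q * Real.sin y ≠ 1 := by
      intro hcontra
      rw [hcontra] at hsin
      simp at hsin
    have hne1' : q * Real.sin y ≠ -1 := by
      intro hcontra
      rw [hcontra] at hsin
      simp at hsin
    have darc : HasDerivAt (fun u : ℝ => Real.arcsin (q * Real.sin u))
        (1 / Real.sqrt (1 - (q * Real.sin y)^2) * (q * Real.cos y)) y :=
      by have := (Real.hasDerivAt_arcsin hne1' hne1).comp y ((Real.hasDerivAt_sin y).const_mul q); exact this
    have d2 := darc.const_mul (2:ℝ)
    have dH := d1.sub d2
    have hamy : am (F1 p q y) = y := ham.1 y (mem_univ y)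
    have habs : (0:ℝ) < |Real.cos y| := abs_pos.2 hy
    have hpow : |Real.cos y| ^ (2/p - 1) * |Real.cos y| ^ (1 - 2/p) = 1 := by
      rw [← Real.rpow_add habs]
      norm_num
    have hDidq : 1 - (q * Real.sin y)^2 = 1 - q^2 * Real.sin y ^ 2 := by ring
    have hs : Real.sqrt (1 - q^2 * Real.sin y ^ 2) ≠ 0 := (Real.sqrt_pos.2 (hDpos y)).ne'
    have hval : h (F1 p q y) * g y
        - 2 * (1 / Real.sqrt (1 - (q * Real.sin y)^2) * (q * Real.cos y)) = 0 := by
      simp only [hhdef, hgdef, hamy, hDidq]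
      linear_combination (2 * q * Real.cos y / Real.sqrt (1 - q^2 * Real.sin y ^ 2)) * hpow
    rw [hval] at dH
    exact dH
  set z : ℤ → ℝ := fun k => -(π/2) + k*π with hzdef
  have hzlt : ∀ k : ℤ, z k < z (k+1) := by
    intro k
    simp only [hzdef]
    push_cast
    linarith
  have hcos_ne : ∀ k : ℤ, ∀ y ∈ Ioo (z k) (z (k+1)), Real.cos y ≠ 0 := by
    intro k y hy hc
    obtain ⟨n, hn⟩ := Real.cos_eq_zero_iff.1 hc
    rw [hn] at hy
    obtain ⟨h1, h2⟩ := hy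
    simp only [hzdef] at h1 h2
    push_cast at h1 h2
    have hkn : (k:ℝ) < (n:ℝ) + 1 := by nlinarith
    have hnk : (n:ℝ) < (k:ℝ) := by nlinarith
    have hkn' : (k:ℤ) < n + 1 := by exact_mod_cast hkn
    have hnk' : (n:ℤ) < k := by exact_mod_cast hnk
    omega
  have hconst : ∀ k : ℤ, ∀ y ∈ Icc (z k) (z (k+1)), H y = H (z k) := by
    intro k y hy
    have hint : ∀ x ∈ interior (Icc (z k) (z (k+1))),
        HasDerivWithinAt H ((fun _ => (0:ℝ)) x) (interior (Icc (z k) (z (k+1)))) x := by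
      intro x hx
      rw [interior_Icc] at hx
      exact (Hderiv x (hcos_ne k x hx)).hasDerivWithinAt
    have hmono := monotoneOn_of_hasDerivWithinAt_nonneg (convex_Icc _ _) Hcont.continuousOn
      hint (fun x _ => le_refl 0)
    have hanti := antitoneOn_of_hasDerivWithinAt_nonpos (convex_Icc _ _) Hcont.continuousOn
      hint (fun x _ => le_refl 0)
    have hzk : z k ∈ Icc (z k) (z (k+1)) := ⟨le_refl _, (hzlt k).le⟩
    exact le_antisymm (hanti hzk hy hy.1) (hmono hzk hy hy.1)
  have hz0 : ∀ k : ℤ, H (z k) = H (z 0) := by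
    intro k
    induction k using Int.induction_on with
    | zero => rfl
    | succ n ih =>
      have hstep := hconst n (z (n+1)) ⟨(hzlt n).le, le_refl _⟩
      rw [hstep]
      exact ih
    | pred n ih =>
      have hstep := hconst (-n-1) (z (-n-1+1)) ⟨(hzlt _).le, le_refl _⟩
      have e : (-(n:ℤ)-1+1) = -(n:ℤ) := by ring
      rw [e] at hstep
      rw [← hstep]
      exact ih
  have hH00 : H 0 = 0 := by
    have hF10 : F1 p q 0 = 0 := by
      rw [hF1 0]
      exact intervalIntegral.integral_same
    simp only [hHdef, hGdef, hF10, intervalIntegral.integral_same, Real.sin_zero, mul_zero,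
      Real.arcsin_zero, sub_zero]
  have Hzero : ∀ y : ℝ, H y = 0 := by
    intro y
    set k : ℤ := ⌊(y + π/2) / π⌋ with hkdef
    have h1 : (k:ℝ) ≤ (y + π/2)/π := Int.floor_le _
    have h2 : (y + π/2)/π < k + 1 := Int.lt_floor_add_one _
    have hy1 : z k ≤ y := by
      have := (le_div_iff₀ hπ).1 h1
      simp only [hzdef]
      linarith
    have hy2 : y ≤ z (k+1) := by
      have := (div_lt_iff₀ hπ).1 h2
      simp only [hzdef]
      push_cast
      linarith
    have hH0' : H 0 = H (z 0) := by
      apply hconst 0 0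
      constructor
      · simp only [hzdef]
        push_cast
        linarith
      · simp only [hzdef]
        push_cast
        linarith
    calc H y = H (z k) := hconst k y ⟨hy1, hy2⟩
      _ = H (z 0) := hz0 k
      _ = H 0 := hH0'.symm
      _ = 0 := hH00
  intro x
  have hx := Hzero (am x)
  simp only [hHdef] at hx
  rw [(ham.2 x).2] at hx
  have hfin : G x = 2 * Real.arcsin (q * Real.sin (am x)) := by linarith
  exact hfin

end
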